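/- Assume the decomposition K = Σ_{i=1}^N K_i satisfies (SD) with constant C_A > 0 and (SCS) with constant C_S > 0, and let u ∈ K be the minimizer of E over K. Consider one sweep of SSO with inexact local solvers: v_0 = u^k ∈ K; for i = 1, ..., N, e_i* ∈ K_i is the exact correction ((A e_i*, φ) = (f - A v_{i-1}, φ) for all φ ∈ K_i), e_i ∈ K_i satisfies both ||e_i* - e_i||_A ≤ (1/2)(κ̄ - 1) ||e_i||_A for a constant κ̄ ≥ 1 and the first-order condition (A v_i - f, e_i) = 0 where v_i = v_{i-1} + e_i; and u^{k+1} = v_N. Then E(u^{k+1}) - E(u) ≤ ρ [E(u^k) - E(u)] with contraction factor ρ = 1 - 1/(1 + C_A [C_S^{1/2} + (κ̄ - 1)/2]²). -/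

import Mathlib

open RealInnerProductSpace


lemma aux_acs {V : Type*} [NormedAddCommGroup V] [InnerProductSpace ℝ V]
    (A : V →L[ℝ] V) (hAsym : ∀ u v : V, ⟪A u, v⟫ = ⟪u, A v⟫)
    (hpos : ∀ x : V, 0 ≤ ⟪A x, x⟫) (x y : V) :
    ⟪A x, y⟫ ≤ Real.sqrt ⟪A x, x⟫ * Real.sqrt ⟪A y, y⟫ := by
  have hquad : ∀ t : ℝ, 0 ≤ ⟪A y, y⟫ * (t * t) + (2 * ⟪A x, y⟫) * t + ⟪A x, x⟫ := by
    intro t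
    have h0 := hpos (x + t • y)
    have hsw : ⟪A y, x⟫ = ⟪A x, y⟫ := by
      rw [hAsym y x, real_inner_comm]
    simp only [map_add, map_smul, inner_add_left, inner_add_right, inner_smul_left,
      inner_smul_right, RingHom.id_apply, starRingEnd_apply, star_trivial] at h0
    rw [hsw] at h0
    nlinarith [h0]
  have hd := discrim_le_zero hquad
  rw [discrim] at hd
  have hb2 : ⟪A x, y⟫ ^ 2 ≤ ⟪A x, x⟫ * ⟪A y, y⟫ := by nlinarith [hd]
  calc ⟪A x, y⟫ ≤ |⟪A x, y⟫| := le_abs_self _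
    _ = Real.sqrt (⟪A x, y⟫ ^ 2) := (Real.sqrt_sq_eq_abs _).symm
    _ ≤ Real.sqrt (⟪A x, x⟫ * ⟪A y, y⟫) := Real.sqrt_le_sqrt hb2
    _ = Real.sqrt ⟪A x, x⟫ * Real.sqrt ⟪A y, y⟫ := Real.sqrt_mul (hpos x) _

set_option maxHeartbeats 1000000 in
/-- Contraction of one SSO sweep with inexact local solvers: under (SD) and (SCS),
if the inexact corrections satisfy `‖e_i* - e_i‖_A ≤ ½(κ̄-1)‖e_i‖_A` and the
first-order condition `(A v_i - f, e_i) = 0`, then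
`E(u^{k+1}) - E(u) ≤ ρ [E(u^k) - E(u)]` with
`ρ = 1 - 1/(1 + C_A [√C_S + (κ̄-1)/2]²)`. -/
theorem sso_inexact_contraction
    {V : Type*} [NormedAddCommGroup V] [InnerProductSpace ℝ V] [CompleteSpace V]
    (A : V →L[ℝ] V) (hAsym : ∀ u v : V, ⟪A u, v⟫ = ⟪u, A v⟫)
    (α : ℝ) (hα : 0 < α) (hAcoer : ∀ v : V, α * ‖v‖ ^ 2 ≤ ⟪A v, v⟫)
    (f : V)
    (E : V → ℝ) (hE : ∀ w : V, E w = 1 / 2 * ⟪A w, w⟫ - ⟪f, w⟫)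
    (K : Submodule ℝ V) (hK : IsClosed ((K : Set V)))
    (N : ℕ) (Ki : Fin N → Submodule ℝ V) (hKi : ∀ i, IsClosed ((Ki i : Set V)))
    (hKiK : ∀ i, Ki i ≤ K)
    (CA : ℝ) (hCA : 0 < CA)
    (hSD : ∀ x ∈ K, ∃ w : Fin N → V, (∀ i, w i ∈ Ki i) ∧ ∑ i, w i = x ∧
      ∑ i, ⟪A (w i), w i⟫ ≤ CA * ⟪A x, x⟫)
    (CS : ℝ) (hCS : 0 < CS)
    (hSCS : ∀ u' v' : Fin N → V, (∀ i, u' i ∈ Ki i) → (∀ j, v' j ∈ Ki j) →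
      ∑ i, ∑ j ∈ Finset.Ioi i, ⟪A (u' i), v' j⟫ ≤
        Real.sqrt CS * Real.sqrt (∑ i, ⟪A (u' i), u' i⟫) *
          Real.sqrt (∑ j, ⟪A (v' j), v' j⟫))
    (u : V) (huK : u ∈ K) (hEuler : ∀ φ ∈ K, ⟪A u - f, φ⟫ = 0)
    (uk : V) (hukK : uk ∈ K)
    (v : ℕ → V) (estar e : Fin N → V)
    (hv0 : v 0 = uk)
    (hestarK : ∀ i : Fin N, estar i ∈ Ki i)
    (hestarEq : ∀ i : Fin N, ∀ φ ∈ Ki i, ⟪A (estar i), φ⟫ = ⟪f - A (v i), φ⟫)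
    (heK : ∀ i : Fin N, e i ∈ Ki i)
    (κbar : ℝ) (hκbar : 1 ≤ κbar)
    (hinexact : ∀ i : Fin N,
      Real.sqrt ⟪A (estar i - e i), estar i - e i⟫ ≤
        1 / 2 * (κbar - 1) * Real.sqrt ⟪A (e i), e i⟫)
    (hvs : ∀ i : Fin N, v ((i : ℕ) + 1) = v i + e i)
    (hfoc : ∀ i : Fin N, ⟪A (v ((i : ℕ) + 1)) - f, e i⟫ = 0)
    (ρ : ℝ)
    (hρ : ρ = 1 - 1 / (1 + CA * (Real.sqrt CS + (κbar - 1) / 2) ^ 2)) :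
    E (v N) - E u ≤ ρ * (E uk - E u) := by
  have hpos : ∀ x : V, 0 ≤ ⟪A x, x⟫ := fun x =>
    le_trans (by positivity) (hAcoer x)
  -- symmetry helper
  have hsym : ∀ x y : V, ⟪A x, y⟫ = ⟪A y, x⟫ := by
    intro x y; rw [hAsym x y, real_inner_comm]
  -- energy decrease per step
  have hstep : ∀ i : Fin N, E (v ((i : ℕ) + 1)) = E (v i) - 1 / 2 * ⟪A (e i), e i⟫ := by
    intro i
    have foc := hfoc i
    rw [hvs i] at foc ⊢
    rw [hE, hE]
    have hsw : ⟪A (e i), v i⟫ = ⟪A (v i), e i⟫ := hsym _ _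
    simp only [map_add, inner_add_left, inner_add_right, inner_sub_left] at foc ⊢
    rw [hsw]
    linarith [foc]
  -- the filter sets
  have hfilt : ∀ (n : ℕ) (hn : n < N),
      Finset.univ.filter (fun j : Fin N => (j : ℕ) < n + 1) =
        insert ⟨n, hn⟩ (Finset.univ.filter (fun j : Fin N => (j : ℕ) < n)) := by
    intro n hn
    ext j
    simp only [Finset.mem_filter, Finset.mem_insert, Finset.mem_univ, true_and, Fin.ext_iff]
    omega
  have hnotmem : ∀ (n : ℕ) (hn : n < N),
      (⟨n, hn⟩ : Fin N) ∉ Finset.univ.filter (fun j : Fin N => (j : ℕ) < n) := by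
    intro n hn; simp
  -- main induction
  have hmain : ∀ n : ℕ, n ≤ N →
      v n = uk + ∑ j ∈ Finset.univ.filter (fun j : Fin N => (j : ℕ) < n), e j ∧
      E (v n) = E uk - 1 / 2 * ∑ j ∈ Finset.univ.filter (fun j : Fin N => (j : ℕ) < n),
        ⟪A (e j), e j⟫ ∧
      v n ∈ K := by
    intro n
    induction n with
    | zero =>
      intro _
      have : Finset.univ.filter (fun j : Fin N => (j : ℕ) < 0) = ∅ := by
        ext j; simp
      rw [hv0, this]
      simp [hukK]
    | succ n ih =>
      intro hn1
      have hn : n < N := hn1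
      obtain ⟨hvn, hEn, hKn⟩ := ih (le_of_lt hn)
      have hi : ((⟨n, hn⟩ : Fin N) : ℕ) = n := rfl
      have hv' : v (n + 1) = v n + e ⟨n, hn⟩ := by
        have := hvs ⟨n, hn⟩; rwa [hi] at this
      have hE' : E (v (n + 1)) = E (v n) - 1 / 2 * ⟪A (e ⟨n, hn⟩), e ⟨n, hn⟩⟫ := by
        have := hstep ⟨n, hn⟩; rwa [hi] at this
      rw [hfilt n hn, Finset.sum_insert (hnotmem n hn), Finset.sum_insert (hnotmem n hn)]
      refine ⟨?_, ?_, ?_⟩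
      · rw [hv', hvn]; abel
      · rw [hE', hEn]; ring
      · rw [hv']; exact K.add_mem hKn (hKiK _ (heK _))
  obtain ⟨hvN, hEN, hvNK⟩ := hmain N le_rfl
  have hfiltN : Finset.univ.filter (fun j : Fin N => (j : ℕ) < N) = Finset.univ := by
    ext j; simp [j.isLt]
  rw [hfiltN] at hvN hEN
  -- tail sums
  have htail : ∀ i : Fin N, v N - v ((i : ℕ) + 1) = ∑ j ∈ Finset.Ioi i, e j := by
    intro i
    obtain ⟨hvi, _, _⟩ := hmain ((i : ℕ) + 1) i.isLt
    have hIic : Finset.univ.filter (fun j : Fin N => (j : ℕ) < (i : ℕ) + 1) =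
        Finset.Iic i := by
      ext j
      simp only [Finset.mem_filter, Finset.mem_univ, true_and, Finset.mem_Iic, Fin.le_def]
      omega
    have hsplit : ∑ j ∈ Finset.Iic i, e j + ∑ j ∈ Finset.Ioi i, e j = ∑ j, e j := by
      rw [← Finset.sum_union]
      · congr 1
        ext j
        simp only [Finset.mem_union, Finset.mem_Iic, Finset.mem_Ioi, Finset.mem_univ,
          iff_true]
        exact le_or_gt j i
      · rw [Finset.disjoint_left]
        intro j hj1 hj2
        simp only [Finset.mem_Iic] at hj1
        simp only [Finset.mem_Ioi] at hj2
        exact absurd (lt_of_le_of_lt hj1 hj2) (lt_irrefl _)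
    rw [hvN, hvi, hIic, ← hsplit]
    abel
  -- energy identity relative to u
  have hEid : ∀ w' ∈ K, E w' - E u = 1 / 2 * ⟪A (w' - u), w' - u⟫ := by
    intro w' hw'
    have heu := hEuler (w' - u) (K.sub_mem hw' huK)
    have hsw : ⟪A u, w'⟫ = ⟪A w', u⟫ := hsym u w'
    rw [hE, hE]
    simp only [inner_sub_left, inner_sub_right, map_sub] at heu ⊢
    linarith [heu, hsw]
  -- decomposition of v N - u
  obtain ⟨wv, hwvK, hwvsum, hwvbound⟩ := hSD (v N - u) (K.sub_mem hvNK huK)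
  have hSnn : (0:ℝ) ≤ ∑ i, ⟪A (e i), e i⟫ := Finset.sum_nonneg fun i _ => hpos _
  have hQnn : (0:ℝ) ≤ ∑ i, ⟪A (wv i), wv i⟫ := Finset.sum_nonneg fun i _ => hpos _
  have hWnn : (0:ℝ) ≤ ⟪A (v N - u), v N - u⟫ := hpos _
  -- per-term identity
  have hterm : ∀ i : Fin N, ⟪A (v N - u), wv i⟫ =
      ⟪A (e i - estar i), wv i⟫ + ∑ j ∈ Finset.Ioi i, ⟪A (e j), wv i⟫ := by
    intro i
    have h1 : ⟪A u - f, wv i⟫ = 0 := hEuler _ (hKiK i (hwvK i))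
    have h2 := hestarEq i (wv i) (hwvK i)
    have h3 : v N = v ((i:ℕ)+1) + ∑ j ∈ Finset.Ioi i, e j := by
      rw [← htail i]; abel
    have hsum : ⟪A (∑ j ∈ Finset.Ioi i, e j), wv i⟫
        = ∑ j ∈ Finset.Ioi i, ⟪A (e j), wv i⟫ := by
      rw [map_sum, sum_inner]
    rw [h3, hvs i]
    simp only [map_add, map_sub, inner_add_left, inner_sub_left] at h1 h2 hsum ⊢
    linarith [hsum, h1, h2]
  have hWsum : ⟪A (v N - u), v N - u⟫ = ∑ i, ⟪A (v N - u), wv i⟫ := by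
    conv_lhs => rw [← hwvsum]
    rw [inner_sum, hwvsum]
  -- bound on T1
  have hT1 : ∑ i, ⟪A (e i - estar i), wv i⟫ ≤
      (κbar - 1) / 2 * (Real.sqrt (∑ i, ⟪A (e i), e i⟫) *
        Real.sqrt (∑ i, ⟪A (wv i), wv i⟫)) := by
    have hstep1 : ∀ i : Fin N, ⟪A (e i - estar i), wv i⟫ ≤
        (1/2*(κbar-1)) * (Real.sqrt ⟪A (e i), e i⟫ * Real.sqrt ⟪A (wv i), wv i⟫) := by
      intro i
      have hcs := aux_acs A hAsym hpos (e i - estar i) (wv i)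
      have hneg : ⟪A (e i - estar i), e i - estar i⟫
          = ⟪A (estar i - e i), estar i - e i⟫ := by
        have h : e i - estar i = -(estar i - e i) := by abel
        rw [h, map_neg, inner_neg_neg]
      calc ⟪A (e i - estar i), wv i⟫
          ≤ Real.sqrt ⟪A (e i - estar i), e i - estar i⟫ *
              Real.sqrt ⟪A (wv i), wv i⟫ := hcs
        _ ≤ (1/2*(κbar-1) * Real.sqrt ⟪A (e i), e i⟫) * Real.sqrt ⟪A (wv i), wv i⟫ := by
            apply mul_le_mul_of_nonneg_right _ (Real.sqrt_nonneg _)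
            rw [hneg]; exact hinexact i
        _ = (1/2*(κbar-1)) *
            (Real.sqrt ⟪A (e i), e i⟫ * Real.sqrt ⟪A (wv i), wv i⟫) := by ring
    calc ∑ i, ⟪A (e i - estar i), wv i⟫
        ≤ ∑ i, (1/2*(κbar-1)) *
            (Real.sqrt ⟪A (e i), e i⟫ * Real.sqrt ⟪A (wv i), wv i⟫) :=
          Finset.sum_le_sum fun i _ => hstep1 i
      _ = (1/2*(κbar-1)) *
            ∑ i, Real.sqrt ⟪A (e i), e i⟫ * Real.sqrt ⟪A (wv i), wv i⟫ := by
          rw [Finset.mul_sum]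
      _ ≤ (1/2*(κbar-1)) * (Real.sqrt (∑ i, ⟪A (e i), e i⟫) *
            Real.sqrt (∑ i, ⟪A (wv i), wv i⟫)) := by
          apply mul_le_mul_of_nonneg_left _ (by linarith)
          exact Real.sum_sqrt_mul_sqrt_le _ (fun i => hpos _) (fun i => hpos _)
      _ = (κbar-1)/2 * (Real.sqrt (∑ i, ⟪A (e i), e i⟫) *
            Real.sqrt (∑ i, ⟪A (wv i), wv i⟫)) := by ring
  -- bound on T2
  have hT2 : ∑ i, ∑ j ∈ Finset.Ioi i, ⟪A (e j), wv i⟫ ≤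
      Real.sqrt CS * Real.sqrt (∑ i, ⟪A (wv i), wv i⟫) *
        Real.sqrt (∑ i, ⟪A (e i), e i⟫) := by
    have h := hSCS wv e hwvK heK
    calc ∑ i, ∑ j ∈ Finset.Ioi i, ⟪A (e j), wv i⟫
        = ∑ i, ∑ j ∈ Finset.Ioi i, ⟪A (wv i), e j⟫ :=
          Finset.sum_congr rfl fun i _ => Finset.sum_congr rfl fun j _ => hsym _ _
      _ ≤ _ := h
  have hsCS : 0 < Real.sqrt CS := Real.sqrt_pos.mpr hCS
  have hβpos : 0 < Real.sqrt CS + (κbar - 1) / 2 := by linarith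
  -- combine
  have hWle : ⟪A (v N - u), v N - u⟫ ≤ (Real.sqrt CS + (κbar - 1) / 2) *
      (Real.sqrt (∑ i, ⟪A (wv i), wv i⟫) * Real.sqrt (∑ i, ⟪A (e i), e i⟫)) := by
    rw [hWsum]
    calc ∑ i, ⟪A (v N - u), wv i⟫
        = (∑ i, ⟪A (e i - estar i), wv i⟫) +
            ∑ i, ∑ j ∈ Finset.Ioi i, ⟪A (e j), wv i⟫ := by
          rw [← Finset.sum_add_distrib]
          exact Finset.sum_congr rfl fun i _ => hterm i
      _ ≤ (κbar-1)/2 * (Real.sqrt (∑ i, ⟪A (e i), e i⟫) *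
              Real.sqrt (∑ i, ⟪A (wv i), wv i⟫)) +
            Real.sqrt CS * Real.sqrt (∑ i, ⟪A (wv i), wv i⟫) *
              Real.sqrt (∑ i, ⟪A (e i), e i⟫) := add_le_add hT1 hT2
      _ = _ := by ring
  have hQle : Real.sqrt (∑ i, ⟪A (wv i), wv i⟫) ≤
      Real.sqrt CA * Real.sqrt ⟪A (v N - u), v N - u⟫ := by
    rw [← Real.sqrt_mul (le_of_lt hCA)]
    exact Real.sqrt_le_sqrt hwvbound
  have hW2 : ⟪A (v N - u), v N - u⟫ ≤ (Real.sqrt CS + (κbar - 1) / 2) *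
      (Real.sqrt CA * Real.sqrt ⟪A (v N - u), v N - u⟫ *
        Real.sqrt (∑ i, ⟪A (e i), e i⟫)) := by
    refine le_trans hWle ?_
    apply mul_le_mul_of_nonneg_left _ (le_of_lt hβpos)
    exact mul_le_mul_of_nonneg_right hQle (Real.sqrt_nonneg _)
  -- cancel a sqrt
  have hWS : ⟪A (v N - u), v N - u⟫ ≤
      CA * (Real.sqrt CS + (κbar - 1) / 2) ^ 2 * ∑ i, ⟪A (e i), e i⟫ := by
    have hWsq : Real.sqrt ⟪A (v N - u), v N - u⟫ * Real.sqrt ⟪A (v N - u), v N - u⟫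
        = ⟪A (v N - u), v N - u⟫ := Real.mul_self_sqrt hWnn
    rcases (Real.sqrt_nonneg ⟪A (v N - u), v N - u⟫).eq_or_lt with h0 | h0
    · have hW0 : ⟪A (v N - u), v N - u⟫ = 0 := by rw [← hWsq, ← h0]; ring
      rw [hW0]
      positivity
    · have hcan : Real.sqrt ⟪A (v N - u), v N - u⟫ ≤
          (Real.sqrt CS + (κbar - 1) / 2) * Real.sqrt CA *
            Real.sqrt (∑ i, ⟪A (e i), e i⟫) := by
        apply le_of_mul_le_mul_right _ h0
        calc Real.sqrt ⟪A (v N - u), v N - u⟫ * Real.sqrt ⟪A (v N - u), v N - u⟫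
            = ⟪A (v N - u), v N - u⟫ := hWsq
          _ ≤ _ := hW2
          _ = (Real.sqrt CS + (κbar - 1) / 2) * Real.sqrt CA *
                Real.sqrt (∑ i, ⟪A (e i), e i⟫) *
                Real.sqrt ⟪A (v N - u), v N - u⟫ := by ring
      have hCA2 : Real.sqrt CA * Real.sqrt CA = CA := Real.mul_self_sqrt hCA.le
      have hS2 : Real.sqrt (∑ i, ⟪A (e i), e i⟫) * Real.sqrt (∑ i, ⟪A (e i), e i⟫)
          = ∑ i, ⟪A (e i), e i⟫ := Real.mul_self_sqrt hSnn
      calc ⟪A (v N - u), v N - u⟫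
          = Real.sqrt ⟪A (v N - u), v N - u⟫ * Real.sqrt ⟪A (v N - u), v N - u⟫ :=
            hWsq.symm
        _ ≤ ((Real.sqrt CS + (κbar - 1) / 2) * Real.sqrt CA *
              Real.sqrt (∑ i, ⟪A (e i), e i⟫)) *
            ((Real.sqrt CS + (κbar - 1) / 2) * Real.sqrt CA *
              Real.sqrt (∑ i, ⟪A (e i), e i⟫)) :=
            mul_le_mul hcan hcan (Real.sqrt_nonneg _) (by positivity)
        _ = (Real.sqrt CS + (κbar - 1) / 2) ^ 2 * (Real.sqrt CA * Real.sqrt CA) *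
            (Real.sqrt (∑ i, ⟪A (e i), e i⟫) * Real.sqrt (∑ i, ⟪A (e i), e i⟫)) := by
            ring
        _ = CA * (Real.sqrt CS + (κbar - 1) / 2) ^ 2 * ∑ i, ⟪A (e i), e i⟫ := by
            rw [hCA2, hS2]; ring
  -- final arithmetic
  have hEvN : E (v N) - E u = 1/2 * ⟪A (v N - u), v N - u⟫ := hEid (v N) hvNK
  have hEuk : E uk - E u = 1/2 * ⟪A (v N - u), v N - u⟫ + 1/2 * ∑ i, ⟪A (e i), e i⟫ := by
    linarith [hEN, hEvN]
  have hcpos : 0 < CA * (Real.sqrt CS + (κbar - 1) / 2) ^ 2 := by positivity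
  have h1c : 0 < 1 + CA * (Real.sqrt CS + (κbar - 1) / 2) ^ 2 := by linarith
  have hkey : ρ = (CA * (Real.sqrt CS + (κbar - 1) / 2) ^ 2) /
      (1 + CA * (Real.sqrt CS + (κbar - 1) / 2) ^ 2) := by
    rw [hρ]; field_simp; ring
  set c := CA * (Real.sqrt CS + (κbar - 1) / 2) ^ 2 with hc
  rw [hEvN, hEuk, hkey, div_mul_eq_mul_div c (1 + c), le_div_iff₀ h1c]
  nlinarith [hWS, hSnn, hWnn, hcpos]
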